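/- arXiv:1705.02205 — 2 statements merged into one kernel-verified Lean document; each statement's English description precedes it below -/
import Mathlib

section
/- Suppose A < 0 and −A · Ĩ(τ_E) < τ_E · (I_m + τ_E), where A := −b_E^E/√a_E + (b_I^E/√a_E) · b_E^I N_I(0)² I(1/τ_E) / (√a_I + b_I^I N_I(1/τ_E)² I(0)), Ĩ(τ_E) := ∫_0^∞ e^{-s²/2} e^{s·b_I^E N_I(1/τ_E)/√a_E} (e^{s V_F/√a_E} − e^{s V_R/√a_E}) ds, and I_m := min_{0 ≤ N_E ≤ 1/τ_E} I_1(N_E, N_I(N_E)). Then F(N_E) := N_E(τ_E + I_1(N_E,N_I(N_E))) satisfies F'(N_E) ≥ I_m + τ_E + (A/τ_E)·Ĩ(τ_E) > 0 on (0,1/τ_E), hence F is strictly increasing there and the steady-state system has exactly one solution. -/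
/-- K(w_R, w_F) := ∫_0^∞ (e^{-s²/2}/s)(e^{s·w_F} − e^{s·w_R}) ds (Lebesgue integral on (0,∞)). -/
noncomputable def K (wR wF : ℝ) : ℝ :=
  ∫ s in Set.Ioi (0 : ℝ), Real.exp (-s ^ 2 / 2) / s * (Real.exp (s * wF) - Real.exp (s * wR))

/-- I₁(N_E,N_I) with V_0^E(N_E,N_I) := b_E^E N_E − b_I^E N_I + (b_E^E − b_E^E) ν_{E,ext}. -/
noncomputable def I1 (VR VF bEE bIE aE ν NE NI : ℝ) : ℝ :=
  K ((VR - (bEE * NE - bIE * NI + (bEE - bEE) * ν)) / Real.sqrt aE)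
    ((VF - (bEE * NE - bIE * NI + (bEE - bEE) * ν)) / Real.sqrt aE)

/-- I₂(N_E,N_I) with V_0^I(N_E,N_I) := b_E^I N_E − b_I^I N_I + (b_E^I − b_E^E) ν_{E,ext}. -/
noncomputable def I2 (VR VF bEE bEI bII aI ν NE NI : ℝ) : ℝ :=
  K ((VR - (bEI * NE - bII * NI + (bEI - bEE) * ν)) / Real.sqrt aI)
    ((VF - (bEI * NE - bII * NI + (bEI - bEE) * ν)) / Real.sqrt aI)

/-- I(N_E), with N_I(·) the implicitly defined function. -/
noncomputable def Ifun (VR VF bEE bEI bII aI ν : ℝ) (NIfun : ℝ → ℝ) (NE : ℝ) : ℝ :=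
  ∫ s in Set.Ioi (0 : ℝ),
    Real.exp (-s ^ 2 / 2) *
      Real.exp (-((bEI * NE - bII * NIfun NE + (bEI - bEE) * ν) * s) / Real.sqrt aI) *
      (Real.exp (s * VF / Real.sqrt aI) - Real.exp (s * VR / Real.sqrt aI))

/-- A := −b_E^E/√a_E + (b_I^E/√a_E)·b_E^I N_I(0)² I(1/τ_E)/(√a_I + b_I^I N_I(1/τ_E)² I(0)). -/
noncomputable def Aconst (VR VF bEE bIE bEI bII τE aE aI ν : ℝ) (NIfun : ℝ → ℝ) : ℝ :=
  -(bEE / Real.sqrt aE) + bIE / Real.sqrt aE *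
    (bEI * (NIfun 0) ^ 2 * Ifun VR VF bEE bEI bII aI ν NIfun (1 / τE) /
      (Real.sqrt aI + bII * (NIfun (1 / τE)) ^ 2 * Ifun VR VF bEE bEI bII aI ν NIfun 0))

/-- Ĩ(τ_E) := ∫_0^∞ e^{-s²/2} e^{s·b_I^E N_I(1/τ_E)/√a_E}(e^{s V_F/√a_E} − e^{s V_R/√a_E}) ds. -/
noncomputable def Itilde (VR VF bIE τE aE : ℝ) (NIfun : ℝ → ℝ) : ℝ :=
  ∫ s in Set.Ioi (0 : ℝ),
    Real.exp (-s ^ 2 / 2) * Real.exp (s * bIE * NIfun (1 / τE) / Real.sqrt aE) *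
      (Real.exp (s * VF / Real.sqrt aE) - Real.exp (s * VR / Real.sqrt aE))

/-- I_m := min_{0 ≤ N_E ≤ 1/τ_E} I_1(N_E, N_I(N_E)). -/
noncomputable def Imin (VR VF bEE bIE τE aE ν : ℝ) (NIfun : ℝ → ℝ) : ℝ :=
  sInf ((fun NE => I1 VR VF bEE bIE aE ν NE (NIfun NE)) '' Set.Icc 0 (1 / τE))

/- auxiliary library -/

open MeasureTheory Real Set Filter
open scoped Topology ENNReal


noncomputable def Jf (r f t : ℝ) : ℝ :=
  ∫ s in Set.Ioi (0:ℝ), Real.exp (-s^2/2) * (Real.exp (s*(f-t)) - Real.exp (s*(r-t)))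

noncomputable def Kf (r f t : ℝ) : ℝ := K (r - t) (f - t)

lemma int_gauss (c : ℝ) : IntegrableOn (fun s : ℝ => Real.exp (-s^2/2) * Real.exp (s*c)) (Set.Ioi 0) := by
  have h : Integrable (fun s : ℝ => Real.exp (c^2/2) * Real.exp (-(1/2) * (s - c)^2)) :=
    ((integrable_exp_neg_mul_sq (by norm_num : (0:ℝ) < 1/2)).comp_sub_right c).const_mul _
  have he : (fun s : ℝ => Real.exp (-s^2/2) * Real.exp (s*c)) =
      fun s : ℝ => Real.exp (c^2/2) * Real.exp (-(1/2) * (s - c)^2) := by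
    funext s
    rw [← Real.exp_add, ← Real.exp_add]
    ring_nf
  rw [he]
  exact h.integrableOn

lemma int_diff (a b : ℝ) :
    IntegrableOn (fun s : ℝ => Real.exp (-s^2/2) * (Real.exp (s*b) - Real.exp (s*a))) (Set.Ioi 0) := by
  have := (int_gauss b).sub (int_gauss a)
  simpa [mul_sub, Pi.sub_def] using this

-- key pointwise inequality
lemma exp_sub_exp_le {x y : ℝ} (h : x ≤ y) : Real.exp y - Real.exp x ≤ (y - x) * Real.exp y := by
  have h1 : Real.exp (x - y) * Real.exp y = Real.exp x := by rw [← Real.exp_add]; ring_nf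
  nlinarith [mul_le_mul_of_nonneg_right (Real.add_one_le_exp (x - y)) (Real.exp_pos y).le]

lemma exp_sub_exp_nonneg {x y : ℝ} (h : x ≤ y) : 0 ≤ Real.exp y - Real.exp x :=
  sub_nonneg.2 (Real.exp_le_exp.2 h)

lemma meas_K (a b : ℝ) :
    AEStronglyMeasurable (fun s : ℝ => Real.exp (-s^2/2) / s * (Real.exp (s*b) - Real.exp (s*a)))
      (volume.restrict (Set.Ioi 0)) := by
  apply ContinuousOn.aestronglyMeasurable ?_ measurableSet_Ioi
  refine ContinuousOn.mul (ContinuousOn.div (by fun_prop) continuousOn_id ?_) (by fun_prop)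
  intro s hs
  exact ne_of_gt hs

lemma int_K (a b : ℝ) (hab : a ≤ b) :
    IntegrableOn (fun s : ℝ => Real.exp (-s^2/2) / s * (Real.exp (s*b) - Real.exp (s*a))) (Set.Ioi 0) := by
  refine Integrable.mono' (((int_gauss b).const_mul (b - a))) (meas_K a b) ?_
  filter_upwards [ae_restrict_mem measurableSet_Ioi] with s hs
  have hs0 : (0:ℝ) < s := hs
  have h1 : s * a ≤ s * b := by nlinarith
  have h2 : Real.exp (s*b) - Real.exp (s*a) ≤ (s*b - s*a) * Real.exp (s*b) := exp_sub_exp_le h1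
  have h3 : 0 ≤ Real.exp (s*b) - Real.exp (s*a) := exp_sub_exp_nonneg h1
  rw [Real.norm_eq_abs, abs_of_nonneg (by positivity)]
  rw [div_mul_eq_mul_div, div_le_iff₀ hs0]
  calc Real.exp (-s^2/2) * (Real.exp (s*b) - Real.exp (s*a))
      ≤ Real.exp (-s^2/2) * ((s*b - s*a) * Real.exp (s*b)) := by
        exact mul_le_mul_of_nonneg_left h2 (Real.exp_pos _).le
    _ = (b - a) * (Real.exp (-s^2/2) * Real.exp (s*b)) * s := by ring

lemma K_nonneg {a b : ℝ} (hab : a ≤ b) : 0 ≤ K a b := by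
  apply setIntegral_nonneg measurableSet_Ioi
  intro s hs
  have hs0 : (0:ℝ) < s := hs
  have h1 : s * a ≤ s * b := by nlinarith
  have := exp_sub_exp_nonneg h1
  positivity

lemma K_pos {a b : ℝ} (hab : a < b) : 0 < K a b := by
  rw [K]
  rw [setIntegral_pos_iff_support_of_nonneg_ae ?pos (int_K a b hab.le)]
  case pos =>
    filter_upwards [ae_restrict_mem measurableSet_Ioi] with s hs
    have hs0 : (0:ℝ) < s := hs
    have h1 : s * a ≤ s * b := by nlinarith [hab.le]
    have := exp_sub_exp_nonneg h1
    positivity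
  refine lt_of_lt_of_le (?_ : (0:ℝ≥0∞) < volume (Set.Ioi (0:ℝ))) (measure_mono (fun s hs => ?_))
  · simp
  · have hs0 : (0:ℝ) < s := hs
    have h1 : s * a < s * b := by nlinarith
    refine ⟨?_, hs⟩
    have h2 : 0 < Real.exp (s*b) - Real.exp (s*a) := sub_pos.2 (Real.exp_lt_exp.2 h1)
    simp only [Function.mem_support]
    positivity

lemma Jf_factor (r f t s : ℝ) :
    Real.exp (s*(f-t)) - Real.exp (s*(r-t)) =
      (Real.exp (s*f) - Real.exp (s*r)) * Real.exp (-(s*t)) := by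
  rw [sub_mul, ← Real.exp_add, ← Real.exp_add]
  ring_nf

lemma int_Jf (r f t : ℝ) :
    IntegrableOn (fun s : ℝ => Real.exp (-s^2/2) * (Real.exp (s*(f-t)) - Real.exp (s*(r-t))))
      (Set.Ioi 0) := int_diff (r-t) (f-t)

lemma Jf_nonneg {r f : ℝ} (hrf : r ≤ f) (t : ℝ) : 0 ≤ Jf r f t := by
  apply setIntegral_nonneg measurableSet_Ioi
  intro s hs
  have hs0 : (0:ℝ) < s := hs
  have h1 : s * (r-t) ≤ s * (f-t) := by nlinarith
  have := exp_sub_exp_nonneg h1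
  positivity

lemma Jf_anti {r f : ℝ} (hrf : r ≤ f) {t1 t2 : ℝ} (h : t1 ≤ t2) : Jf r f t2 ≤ Jf r f t1 := by
  apply setIntegral_mono_on (int_Jf r f t2) (int_Jf r f t1) measurableSet_Ioi
  intro s hs
  have hs0 : (0:ℝ) < s := hs
  rw [Jf_factor, Jf_factor]
  have h1 : s * r ≤ s * f := by nlinarith
  have h2 : Real.exp (-(s*t2)) ≤ Real.exp (-(s*t1)) := by
    apply Real.exp_le_exp.2; nlinarith
  have h3 := exp_sub_exp_nonneg h1
  gcongr

lemma Jf_pos {r f : ℝ} (hrf : r < f) (t : ℝ) : 0 < Jf r f t := by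
  rw [Jf]
  rw [setIntegral_pos_iff_support_of_nonneg_ae ?pos (int_Jf r f t)]
  case pos =>
    filter_upwards [ae_restrict_mem measurableSet_Ioi] with s hs
    have hs0 : (0:ℝ) < s := hs
    have h1 : s * (r-t) ≤ s * (f-t) := by nlinarith [hrf.le]
    have := exp_sub_exp_nonneg h1
    positivity
  refine lt_of_lt_of_le (?_ : (0:ℝ≥0∞) < volume (Set.Ioi (0:ℝ))) (measure_mono (fun s hs => ?_))
  · simp
  · have hs0 : (0:ℝ) < s := hs
    have h1 : s * (r-t) < s * (f-t) := by nlinarith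
    refine ⟨?_, hs⟩
    have h2 : 0 < Real.exp (s*(f-t)) - Real.exp (s*(r-t)) := sub_pos.2 (Real.exp_lt_exp.2 h1)
    simp only [Function.mem_support]
    positivity

lemma Jf_continuous (r f : ℝ) : Continuous (Jf r f) := by
  rw [continuous_iff_continuousAt]
  intro t0
  apply continuousAt_of_dominated (bound := fun s =>
      Real.exp (-s^2/2) * Real.exp (s*(f + |t0| + 1)) + Real.exp (-s^2/2) * Real.exp (s*(r + |t0| + 1)))
  · filter_upwards with t
    exact ((int_Jf r f t)).aestronglyMeasurable
  · filter_upwards [eventually_abs_sub_lt t0 one_pos] with t ht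
    filter_upwards [ae_restrict_mem measurableSet_Ioi] with s hs
    have hs0 : (0:ℝ) < s := hs
    have hbt : -t ≤ |t0| + 1 := by
      have h := abs_lt.1 ht
      have h2 := neg_abs_le t0
      linarith [h.1]
    have h1 : Real.exp (s*(f-t)) ≤ Real.exp (s*(f + |t0| + 1)) := by
      apply Real.exp_le_exp.2; nlinarith
    have h2 : Real.exp (s*(r-t)) ≤ Real.exp (s*(r + |t0| + 1)) := by
      apply Real.exp_le_exp.2; nlinarith
    rw [Real.norm_eq_abs, abs_mul, abs_of_nonneg (Real.exp_pos _).le]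
    calc Real.exp (-s^2/2) * |Real.exp (s*(f-t)) - Real.exp (s*(r-t))|
        ≤ Real.exp (-s^2/2) * (Real.exp (s*(f + |t0| + 1)) + Real.exp (s*(r + |t0| + 1))) := by
          apply mul_le_mul_of_nonneg_left ?_ (Real.exp_pos _).le
          refine (abs_sub _ _).trans ?_
          rw [abs_of_nonneg (Real.exp_pos _).le, abs_of_nonneg (Real.exp_pos _).le]
          exact add_le_add h1 h2
      _ = _ := by ring
  · exact (int_gauss _).add (int_gauss _)
  · filter_upwards with s
    fun_prop

lemma Kf_eq_integral (r f t : ℝ) : Kf r f t =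
    ∫ s in Set.Ioi (0:ℝ), Real.exp (-s^2/2) / s * (Real.exp (s*(f-t)) - Real.exp (s*(r-t))) := rfl

lemma Kf_hasDeriv {r f : ℝ} (hrf : r ≤ f) (t0 : ℝ) :
    HasDerivAt (Kf r f) (-(Jf r f t0)) t0 := by
  have key := hasDerivAt_integral_of_dominated_loc_of_deriv_le (μ := volume.restrict (Set.Ioi 0))
    (F := fun t s => Real.exp (-s^2/2) / s * (Real.exp (s*(f-t)) - Real.exp (s*(r-t))))
    (F' := fun t s => -(Real.exp (-s^2/2) * (Real.exp (s*(f-t)) - Real.exp (s*(r-t)))))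
    (x₀ := t0) (s := Metric.ball t0 1) (Metric.ball_mem_nhds t0 one_pos)
    (bound := fun s => Real.exp (-s^2/2) * Real.exp (s*(f + |t0| + 1)) + Real.exp (-s^2/2) * Real.exp (s*(r + |t0| + 1)))
    ?meas ?int ?meas' ?bdd ?bint ?diff
  case meas =>
    filter_upwards with t
    exact (int_K (r-t) (f-t) (by linarith)).aestronglyMeasurable
  case int => exact int_K (r-t0) (f-t0) (by linarith)
  case meas' => exact ((int_Jf r f t0).neg).aestronglyMeasurable
  case bdd =>
    filter_upwards [ae_restrict_mem measurableSet_Ioi] with s hs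
    intro t ht
    have hs0 : (0:ℝ) < s := hs
    have hbt : -t ≤ |t0| + 1 := by
      have h := abs_lt.1 (mem_ball_iff_norm.1 ht)
      have := neg_abs_le t0
      linarith [h.1]
    have h1 : Real.exp (s*(f-t)) ≤ Real.exp (s*(f + |t0| + 1)) := by
      apply Real.exp_le_exp.2; nlinarith
    have h2 : Real.exp (s*(r-t)) ≤ Real.exp (s*(r + |t0| + 1)) := by
      apply Real.exp_le_exp.2; nlinarith
    rw [norm_neg, Real.norm_eq_abs, abs_mul, abs_of_nonneg (Real.exp_pos _).le]
    calc Real.exp (-s^2/2) * |Real.exp (s*(f-t)) - Real.exp (s*(r-t))|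
        ≤ Real.exp (-s^2/2) * (Real.exp (s*(f + |t0| + 1)) + Real.exp (s*(r + |t0| + 1))) := by
          apply mul_le_mul_of_nonneg_left ?_ (Real.exp_pos _).le
          refine (abs_sub _ _).trans ?_
          rw [abs_of_nonneg (Real.exp_pos _).le, abs_of_nonneg (Real.exp_pos _).le]
          exact add_le_add h1 h2
      _ = _ := by ring
  case bint => exact (int_gauss _).add (int_gauss _)
  case diff =>
    filter_upwards [ae_restrict_mem measurableSet_Ioi] with s hs
    intro t ht
    have hs0 : (0:ℝ) < s := hs
    have hF : HasDerivAt (fun t => Real.exp (-s^2/2) / s * (Real.exp (s*(f-t)) - Real.exp (s*(r-t))))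
        (Real.exp (-s^2/2) / s * ((-s) * Real.exp (s*(f-t)) - (-s) * Real.exp (s*(r-t)))) t := by
      have hf : HasDerivAt (fun t : ℝ => Real.exp (s*(f-t))) ((-s) * Real.exp (s*(f-t))) t := by
        have h0 : HasDerivAt (fun t : ℝ => s*(f-t)) (-s) t := by
          simpa using ((hasDerivAt_id t).const_sub f).const_mul s
        simpa [mul_comm, Function.comp_def] using (Real.hasDerivAt_exp (s*(f-t))).comp t h0
      have hr : HasDerivAt (fun t : ℝ => Real.exp (s*(r-t))) ((-s) * Real.exp (s*(r-t))) t := by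
        have h0 : HasDerivAt (fun t : ℝ => s*(r-t)) (-s) t := by
          simpa using ((hasDerivAt_id t).const_sub r).const_mul s
        simpa [mul_comm, Function.comp_def] using (Real.hasDerivAt_exp (s*(r-t))).comp t h0
      exact (hf.sub hr).const_mul _
    refine hF.congr_deriv ?_
    simp only [div_mul_eq_mul_div]; rw [div_eq_iff hs0.ne']
    ring
  rw [show -(Jf r f t0) = ∫ s in Set.Ioi (0:ℝ), -(Real.exp (-s^2/2) * (Real.exp (s*(f-t0)) - Real.exp (s*(r-t0)))) from by rw [integral_neg]; rfl]
  exact key.2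

lemma Kf_deriv {r f : ℝ} (hrf : r ≤ f) : deriv (Kf r f) = fun t => -(Jf r f t) :=
  funext fun t => (Kf_hasDeriv hrf t).deriv

lemma Kf_contDiff {r f : ℝ} (hrf : r ≤ f) : ContDiff ℝ 1 (Kf r f) :=
  contDiff_one_iff_deriv.2 ⟨fun t => (Kf_hasDeriv hrf t).differentiableAt,
    by rw [Kf_deriv hrf]; exact (Jf_continuous r f).neg⟩

lemma Kf_strictDeriv {r f : ℝ} (hrf : r ≤ f) (t : ℝ) :
    HasStrictDerivAt (Kf r f) (-(Jf r f t)) t := by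
  have h := ((Kf_contDiff hrf).contDiffAt (x := t)).hasStrictDerivAt one_ne_zero
  rw [Kf_deriv hrf] at h
  exact h

lemma Kf_continuous {r f : ℝ} (hrf : r ≤ f) : Continuous (Kf r f) :=
  (Kf_contDiff hrf).continuous

lemma Kf_strictAnti {r f : ℝ} (hrf : r < f) : StrictAnti (Kf r f) := by
  apply strictAnti_of_deriv_neg
  intro t
  rw [Kf_deriv hrf.le]
  simpa using Jf_pos hrf t

lemma Kf_anti {r f : ℝ} (hrf : r < f) : Antitone (Kf r f) := (Kf_strictAnti hrf).antitone

lemma Kf_nonneg {r f : ℝ} (hrf : r ≤ f) (t : ℝ) : 0 ≤ Kf r f t := K_nonneg (by linarith)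

lemma Kf_pos {r f : ℝ} (hrf : r < f) (t : ℝ) : 0 < Kf r f t := K_pos (by linarith)





lemma I1_eq (VR VF bEE bIE aE ν x n : ℝ) :
    I1 VR VF bEE bIE aE ν x n =
      Kf (VR/Real.sqrt aE) (VF/Real.sqrt aE) ((bEE*x - bIE*n)/Real.sqrt aE) := by
  rw [I1, Kf]
  simp only [sub_self, zero_mul, add_zero, sub_div]

lemma I2_eq (VR VF bEE bEI bII aI ν x n : ℝ) :
    I2 VR VF bEE bEI bII aI ν x n =
      Kf (VR/Real.sqrt aI) (VF/Real.sqrt aI) ((bEI*x - bII*n + (bEI-bEE)*ν)/Real.sqrt aI) := by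
  rw [I2, Kf]
  simp only [sub_div]

lemma Ifun_eq (VR VF bEE bEI bII aI ν : ℝ) (NIfun : ℝ → ℝ) (x : ℝ) :
    Ifun VR VF bEE bEI bII aI ν NIfun x =
      Jf (VR/Real.sqrt aI) (VF/Real.sqrt aI)
        ((bEI*x - bII*NIfun x + (bEI-bEE)*ν)/Real.sqrt aI) := by
  rw [Ifun, Jf]
  congr 1
  funext s
  simp only [mul_sub, ← Real.exp_add]
  ring_nf

lemma Itilde_eq (VR VF bIE τE aE : ℝ) (NIfun : ℝ → ℝ) :
    Itilde VR VF bIE τE aE NIfun =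
      Jf (VR/Real.sqrt aE) (VF/Real.sqrt aE) (-(bIE*NIfun (1/τE))/Real.sqrt aE) := by
  rw [Itilde, Jf]
  congr 1
  funext s
  simp only [mul_sub, ← Real.exp_add]
  ring_nf

section Implicit

variable {rI fI bEI bII cI sI τI : ℝ} {NIfun : ℝ → ℝ}

/-- strict monotonicity of n ↦ n(τI + Kf(...n...)) -/
lemma g_strictmono (hrIF : rI < fI) (hbII : 0 < bII) (hsI : 0 < sI) (hτI : 0 < τI)
    (x : ℝ) {n1 n2 : ℝ} (h1 : 0 < n1) (h12 : n1 < n2) :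
    n1*(τI + Kf rI fI ((bEI*x - bII*n1 + cI)/sI)) <
      n2*(τI + Kf rI fI ((bEI*x - bII*n2 + cI)/sI)) := by
  have harg : (bEI*x - bII*n2 + cI)/sI ≤ (bEI*x - bII*n1 + cI)/sI := by
    apply (div_le_div_iff_of_pos_right hsI).2
    nlinarith
  have hK : Kf rI fI ((bEI*x - bII*n1 + cI)/sI) ≤ Kf rI fI ((bEI*x - bII*n2 + cI)/sI) :=
    Kf_anti hrIF harg
  have hK0 : 0 ≤ Kf rI fI ((bEI*x - bII*n1 + cI)/sI) := Kf_nonneg hrIF.le _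
  nlinarith

lemma NIfun_mono (hrIF : rI < fI) (hbEI : 0 < bEI) (hbII : 0 < bII) (hsI : 0 < sI) (hτI : 0 < τI)
    (hNI : ∀ x, 0 ≤ x → 0 < NIfun x ∧
      NIfun x * (τI + Kf rI fI ((bEI*x - bII*NIfun x + cI)/sI)) = 1)
    {x1 x2 : ℝ} (hx1 : 0 ≤ x1) (hx12 : x1 ≤ x2) : NIfun x1 ≤ NIfun x2 := by
  by_contra hcon
  push_neg at hcon
  obtain ⟨hp1, he1⟩ := hNI x1 hx1
  obtain ⟨hp2, he2⟩ := hNI x2 (le_trans hx1 hx12)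
  have harg : (bEI*x1 - bII*NIfun x1 + cI)/sI ≤ (bEI*x2 - bII*NIfun x2 + cI)/sI := by
    apply (div_le_div_iff_of_pos_right hsI).2
    nlinarith
  have hK : Kf rI fI ((bEI*x2 - bII*NIfun x2 + cI)/sI) ≤
      Kf rI fI ((bEI*x1 - bII*NIfun x1 + cI)/sI) := Kf_anti hrIF harg
  have hK0 : 0 ≤ Kf rI fI ((bEI*x2 - bII*NIfun x2 + cI)/sI) := Kf_nonneg hrIF.le _
  nlinarith

lemma tI_mono (hrIF : rI < fI) (hbEI : 0 < bEI) (hbII : 0 < bII) (hsI : 0 < sI) (hτI : 0 < τI)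
    (hNI : ∀ x, 0 ≤ x → 0 < NIfun x ∧
      NIfun x * (τI + Kf rI fI ((bEI*x - bII*NIfun x + cI)/sI)) = 1)
    {x1 x2 : ℝ} (hx1 : 0 ≤ x1) (hx12 : x1 ≤ x2) :
    (bEI*x1 - bII*NIfun x1 + cI)/sI ≤ (bEI*x2 - bII*NIfun x2 + cI)/sI := by
  obtain ⟨hp1, he1⟩ := hNI x1 hx1
  obtain ⟨hp2, he2⟩ := hNI x2 (le_trans hx1 hx12)
  have hle : NIfun x1 ≤ NIfun x2 := NIfun_mono hrIF hbEI hbII hsI hτI hNI hx1 hx12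
  have hK0 : 0 ≤ Kf rI fI ((bEI*x1 - bII*NIfun x1 + cI)/sI) := Kf_nonneg hrIF.le _
  have hKle : Kf rI fI ((bEI*x2 - bII*NIfun x2 + cI)/sI) ≤
      Kf rI fI ((bEI*x1 - bII*NIfun x1 + cI)/sI) := by
    nlinarith
  by_contra hcon
  push_neg at hcon
  have := Kf_strictAnti hrIF hcon
  linarith

lemma NIfun_cont (hrIF : rI < fI) (hbEI : 0 < bEI) (hbII : 0 < bII) (hsI : 0 < sI) (hτI : 0 < τI)
    (hNI : ∀ x, 0 ≤ x → 0 < NIfun x ∧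
      NIfun x * (τI + Kf rI fI ((bEI*x - bII*NIfun x + cI)/sI)) = 1)
    {x0 : ℝ} (hx0 : 0 < x0) : ContinuousAt NIfun x0 := by
  have hn0 := (hNI x0 hx0.le).1
  have heq0 := (hNI x0 hx0.le).2
  rw [ContinuousAt, Metric.tendsto_nhds]
  intro ε hε
  set ε' := min ε (NIfun x0 / 2) with hε'def
  have hε'pos : 0 < ε' := lt_min hε (by linarith)
  have hε'le : ε' ≤ ε := min_le_left _ _
  have hlo : 0 < NIfun x0 - ε' := by
    have := min_le_right ε (NIfun x0 / 2)
    simp only [← hε'def] at this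
    linarith
  -- continuous family
  have gcont : ∀ n : ℝ, Continuous (fun x => n * (τI + Kf rI fI ((bEI*x - bII*n + cI)/sI))) := by
    intro n
    apply Continuous.mul continuous_const
    apply Continuous.add continuous_const
    exact (Kf_continuous hrIF.le).comp (by fun_prop)
  have hlt1 : (NIfun x0 - ε') * (τI + Kf rI fI ((bEI*x0 - bII*(NIfun x0 - ε') + cI)/sI)) < 1 := by
    have := g_strictmono (bEI := bEI) (cI := cI) hrIF hbII hsI hτI x0 hlo
      (show NIfun x0 - ε' < NIfun x0 by linarith)
    linarith
  have hgt1 : 1 < (NIfun x0 + ε') * (τI + Kf rI fI ((bEI*x0 - bII*(NIfun x0 + ε') + cI)/sI)) := by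
    have := g_strictmono (bEI := bEI) (cI := cI) hrIF hbII hsI hτI x0 hn0
      (show NIfun x0 < NIfun x0 + ε' by linarith)
    linarith
  have hev1 : ∀ᶠ x in 𝓝 x0,
      (NIfun x0 - ε') * (τI + Kf rI fI ((bEI*x - bII*(NIfun x0 - ε') + cI)/sI)) < 1 :=
    ((gcont (NIfun x0 - ε')).continuousAt).eventually_lt continuousAt_const hlt1
  have hev2 : ∀ᶠ x in 𝓝 x0,
      1 < (NIfun x0 + ε') * (τI + Kf rI fI ((bEI*x - bII*(NIfun x0 + ε') + cI)/sI)) :=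
    continuousAt_const.eventually_lt ((gcont (NIfun x0 + ε')).continuousAt) hgt1
  have hev3 : ∀ᶠ x in 𝓝 x0, (0:ℝ) < x := eventually_gt_nhds hx0
  filter_upwards [hev1, hev2, hev3] with x h1 h2 h3
  obtain ⟨hpx, heqx⟩ := hNI x h3.le
  rw [Real.dist_eq, abs_lt]
  constructor
  · -- NIfun x0 - NIfun x < ε' i.e. NIfun x > NIfun x0 - ε'
    by_contra hcon
    push_neg at hcon
    have hle : NIfun x ≤ NIfun x0 - ε' := by linarith
    rcases eq_or_lt_of_le hle with he | hlt
    · rw [← he] at h1; linarith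
    · have := g_strictmono (bEI := bEI) (cI := cI) hrIF hbII hsI hτI x hpx hlt
      linarith
  · -- NIfun x - NIfun x0 < ε
    by_contra hcon
    push_neg at hcon
    have hge : NIfun x0 + ε' ≤ NIfun x := by linarith
    rcases eq_or_lt_of_le hge with he | hlt
    · rw [he] at h2; linarith
    · have := g_strictmono (bEI := bEI) (cI := cI) hrIF hbII hsI hτI x (by linarith) hlt
      linarith

end Implicit

/-- If φ has nonzero strict derivative at u x, u is continuous at x and φ ∘ u is
differentiable at x, then u is differentiable at x with the quotient derivative. -/
lemma hasDerivAt_of_comp {φ u : ℝ → ℝ} {J q' x : ℝ}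
    (hφ : HasStrictDerivAt φ J (u x)) (hJ : J ≠ 0)
    (hu : ContinuousAt u x) (hq : HasDerivAt (fun y => φ (u y)) q' x) :
    HasDerivAt u (J⁻¹ * q') x := by
  have hρ : HasStrictDerivAt (hφ.localInverse φ J (u x) hJ) J⁻¹ (φ (u x)) :=
    hφ.to_localInverse hJ
  have hleft : ∀ᶠ z in 𝓝 (u x), hφ.localInverse φ J (u x) hJ (φ z) = z :=
    (hφ.hasStrictFDerivAt_equiv hJ).eventually_left_inverse
  have hev : ∀ᶠ y in 𝓝 x, hφ.localInverse φ J (u x) hJ (φ (u y)) = u y := hu.eventually hleft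
  have hcomp : HasDerivAt (fun y => hφ.localInverse φ J (u x) hJ (φ (u y))) (J⁻¹ * q') x :=
    (hρ.hasDerivAt).comp x hq
  exact hcomp.congr_of_eventuallyEq (hev.mono fun y hy => hy.symm)

noncomputable def tEx (bEE bIE aE : ℝ) (NIfun : ℝ → ℝ) (x : ℝ) : ℝ :=
  (bEE*x - bIE*NIfun x)/Real.sqrt aE

noncomputable def tIx (bEE bEI bII aI ν : ℝ) (NIfun : ℝ → ℝ) (x : ℝ) : ℝ :=
  (bEI*x - bII*NIfun x + (bEI-bEE)*ν)/Real.sqrt aI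

lemma key_deriv (VR VF bEE bIE bEI bII τE τI aE aI ν : ℝ)
    (hV : VR < VF) (hbEE : 0 < bEE) (hbIE : 0 < bIE) (hbEI : 0 < bEI) (hbII : 0 < bII)
    (hτE : 0 < τE) (hτI : 0 < τI) (haE : 0 < aE) (haI : 0 < aI)
    (NIfun : ℝ → ℝ)
    (hNIfun : ∀ NE : ℝ, 0 ≤ NE → NIfun NE ∈ Set.Ioo 0 (1 / τI) ∧
      NIfun NE * (τI + I2 VR VF bEE bEI bII aI ν NE (NIfun NE)) = 1)
    (Fd : ℝ → ℝ)
    (hFd : ∀ NE ∈ Set.Ioo (0 : ℝ) (1 / τE),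
      HasDerivAt (fun x => x * (τE + I1 VR VF bEE bIE aE ν x (NIfun x))) (Fd NE) NE)
    (x : ℝ) (hx : x ∈ Set.Ioo (0:ℝ) (1/τE)) :
    ∃ n' : ℝ,
      n' * (Real.sqrt aI + bII * ((NIfun x)^2 *
          Jf (VR/Real.sqrt aI) (VF/Real.sqrt aI) (tIx bEE bEI bII aI ν NIfun x))) =
        bEI * ((NIfun x)^2 *
          Jf (VR/Real.sqrt aI) (VF/Real.sqrt aI) (tIx bEE bEI bII aI ν NIfun x)) ∧
      Fd x = τE + Kf (VR/Real.sqrt aE) (VF/Real.sqrt aE) (tEx bEE bIE aE NIfun x)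
        + x * Jf (VR/Real.sqrt aE) (VF/Real.sqrt aE) (tEx bEE bIE aE NIfun x)
            * ((-bEE + bIE*n')/Real.sqrt aE) := by
  obtain ⟨hx1, hx2⟩ := hx
  have hsE : (0:ℝ) < Real.sqrt aE := Real.sqrt_pos.2 haE
  have hsI : (0:ℝ) < Real.sqrt aI := Real.sqrt_pos.2 haI
  have hrEF : VR/Real.sqrt aE < VF/Real.sqrt aE := (div_lt_div_iff_of_pos_right hsE).2 hV
  have hrIF : VR/Real.sqrt aI < VF/Real.sqrt aI := (div_lt_div_iff_of_pos_right hsI).2 hV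
  have hNI : ∀ z, 0 ≤ z → 0 < NIfun z ∧ NIfun z * (τI + Kf (VR/Real.sqrt aI) (VF/Real.sqrt aI)
      ((bEI*z - bII*NIfun z + (bEI-bEE)*ν)/Real.sqrt aI)) = 1 := by
    intro z hz
    refine ⟨(hNIfun z hz).1.1, ?_⟩
    rw [← I2_eq]
    exact (hNIfun z hz).2
  have hNIc : ContinuousAt NIfun x := NIfun_cont hrIF hbEI hbII hsI hτI hNI hx1
  -- u := tEx, continuous at x
  have hucont : ContinuousAt (tEx bEE bIE aE NIfun) x := by
    unfold tEx; fun_prop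
  -- F is差 differentiable; transfer to Kf ∘ u
  have hFF := hFd x ⟨hx1, hx2⟩
  have hFFeq : (fun y => y * (τE + I1 VR VF bEE bIE aE ν y (NIfun y))) =
      fun y => y * (τE + Kf (VR/Real.sqrt aE) (VF/Real.sqrt aE) (tEx bEE bIE aE NIfun y)) := by
    funext y
    rw [I1_eq]
    rfl
  rw [hFFeq] at hFF
  -- derivative of G := Kf ∘ u via division by y
  have hGdiff : DifferentiableAt ℝ
      (fun y => (y * (τE + Kf (VR/Real.sqrt aE) (VF/Real.sqrt aE) (tEx bEE bIE aE NIfun y))) / y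
        - τE) x :=
    ((hFF.differentiableAt.div differentiableAt_id (ne_of_gt hx1))).sub_const τE
  have hGeq : (fun y => Kf (VR/Real.sqrt aE) (VF/Real.sqrt aE) (tEx bEE bIE aE NIfun y)) =ᶠ[𝓝 x]
      (fun y => (y * (τE + Kf (VR/Real.sqrt aE) (VF/Real.sqrt aE) (tEx bEE bIE aE NIfun y))) / y
        - τE) := by
    filter_upwards [eventually_gt_nhds hx1] with y hy
    field_simp
    ring
  have hKu : DifferentiableAt ℝ
      (fun y => Kf (VR/Real.sqrt aE) (VF/Real.sqrt aE) (tEx bEE bIE aE NIfun y)) x :=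
    hGdiff.congr_of_eventuallyEq hGeq
  obtain ⟨q', hq'⟩ : ∃ q', HasDerivAt
      (fun y => Kf (VR/Real.sqrt aE) (VF/Real.sqrt aE) (tEx bEE bIE aE NIfun y)) q' x :=
    ⟨_, hKu.hasDerivAt⟩
  -- invert to get derivative of u
  have hJEpos : 0 < Jf (VR/Real.sqrt aE) (VF/Real.sqrt aE) (tEx bEE bIE aE NIfun x) :=
    Jf_pos hrEF _
  have hJne : -(Jf (VR/Real.sqrt aE) (VF/Real.sqrt aE) (tEx bEE bIE aE NIfun x)) ≠ 0 := by
    simpa using hJEpos.ne'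
  have hu : HasDerivAt (tEx bEE bIE aE NIfun)
      ((-(Jf (VR/Real.sqrt aE) (VF/Real.sqrt aE) (tEx bEE bIE aE NIfun x)))⁻¹ * q') x :=
    hasDerivAt_of_comp (Kf_strictDeriv hrEF.le _) hJne hucont hq'
  set e := (-(Jf (VR/Real.sqrt aE) (VF/Real.sqrt aE) (tEx bEE bIE aE NIfun x)))⁻¹ * q' with he_def
  -- derivative of NIfun
  have hNIrep : ∀ y, NIfun y = (bEE*y - Real.sqrt aE * tEx bEE bIE aE NIfun y)/bIE := by
    intro y
    rw [tEx]
    field_simp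
    ring
  set n' := (bEE - Real.sqrt aE * e)/bIE with hn'_def
  have hNId : HasDerivAt NIfun n' x := by
    have h1 : HasDerivAt (fun y => (bEE*y - Real.sqrt aE * tEx bEE bIE aE NIfun y)/bIE) n' x := by
      rw [hn'_def]
      have := (((hasDerivAt_id x).const_mul bEE).sub (hu.const_mul (Real.sqrt aE))).div_const bIE
      simpa using this
    exact h1.congr_of_eventuallyEq (Filter.Eventually.of_forall hNIrep)
  -- derivative of tIx
  have htI : HasDerivAt (tIx bEE bEI bII aI ν NIfun) ((bEI - bII*n')/Real.sqrt aI) x := by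
    unfold tIx
    have := ((((hasDerivAt_id x).const_mul bEI).sub (hNId.const_mul bII)).add_const
      ((bEI-bEE)*ν)).div_const (Real.sqrt aI)
    simpa using this
  -- implicit equation H ≡ 1
  have hKI := Kf_hasDeriv hrIF.le (tIx bEE bEI bII aI ν NIfun x)
  have hKIc : HasDerivAt (fun y => Kf (VR/Real.sqrt aI) (VF/Real.sqrt aI)
      (tIx bEE bEI bII aI ν NIfun y))
      (-(Jf (VR/Real.sqrt aI) (VF/Real.sqrt aI) (tIx bEE bEI bII aI ν NIfun x))
        * ((bEI - bII*n')/Real.sqrt aI)) x := hKI.comp x htI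
  have hH : HasDerivAt (fun y => NIfun y * (τI + Kf (VR/Real.sqrt aI) (VF/Real.sqrt aI)
      (tIx bEE bEI bII aI ν NIfun y)))
      (n' * (τI + Kf (VR/Real.sqrt aI) (VF/Real.sqrt aI) (tIx bEE bEI bII aI ν NIfun x))
        + NIfun x * (-(Jf (VR/Real.sqrt aI) (VF/Real.sqrt aI) (tIx bEE bEI bII aI ν NIfun x))
          * ((bEI - bII*n')/Real.sqrt aI))) x := hNId.mul (hKIc.const_add τI)
  have hHeq : (fun y => NIfun y * (τI + Kf (VR/Real.sqrt aI) (VF/Real.sqrt aI)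
      (tIx bEE bEI bII aI ν NIfun y))) =ᶠ[𝓝 x] (fun _ => (1:ℝ)) := by
    filter_upwards [eventually_gt_nhds hx1] with y hy
    exact (hNI y hy.le).2
  have hzero : HasDerivAt (fun y => NIfun y * (τI + Kf (VR/Real.sqrt aI) (VF/Real.sqrt aI)
      (tIx bEE bEI bII aI ν NIfun y))) 0 x :=
    (hasDerivAt_const x (1:ℝ)).congr_of_eventuallyEq hHeq
  have hD0 : n' * (τI + Kf (VR/Real.sqrt aI) (VF/Real.sqrt aI) (tIx bEE bEI bII aI ν NIfun x))
        + NIfun x * (-(Jf (VR/Real.sqrt aI) (VF/Real.sqrt aI) (tIx bEE bEI bII aI ν NIfun x))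
          * ((bEI - bII*n')/Real.sqrt aI)) = 0 := hH.unique hzero
  -- rearrange: n' * (sI + bII * T) = bEI * T with T := NIfun x ^2 * JI
  refine ⟨n', ?_, ?_⟩
  · have heqx := (hNI x hx1.le).2
    have hnx : 0 < NIfun x := (hNI x hx1.le).1
    have hKIval : τI + Kf (VR/Real.sqrt aI) (VF/Real.sqrt aI) (tIx bEE bEI bII aI ν NIfun x)
        = 1/NIfun x := by
      rw [eq_div_iff hnx.ne']
      rw [mul_comm] at heqx
      exact heqx
    rw [hKIval] at hD0
    have hsIne : Real.sqrt aI ≠ 0 := hsI.ne'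
    field_simp at hD0 ⊢
    nlinarith [hD0]
  · -- identify Fd x
    have hFder : HasDerivAt
        (fun y => y * (τE + Kf (VR/Real.sqrt aE) (VF/Real.sqrt aE) (tEx bEE bIE aE NIfun y)))
        (1 * (τE + Kf (VR/Real.sqrt aE) (VF/Real.sqrt aE) (tEx bEE bIE aE NIfun x)) + x * q')
        x := (hasDerivAt_id x).mul (hq'.const_add τE)
    have hFdval : Fd x = 1 * (τE + Kf (VR/Real.sqrt aE) (VF/Real.sqrt aE)
        (tEx bEE bIE aE NIfun x)) + x * q' := hFF.unique hFder
    have hq'val : q' = -(Jf (VR/Real.sqrt aE) (VF/Real.sqrt aE) (tEx bEE bIE aE NIfun x)) * e := by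
      rw [he_def]
      field_simp
    have heval : Real.sqrt aE * e = bEE - bIE * n' := by
      rw [hn'_def]
      field_simp
      ring
    rw [hFdval, hq'val]
    have hsEne : Real.sqrt aE ≠ 0 := hsE.ne'
    field_simp
    linear_combination (-(x * Jf (VR/Real.sqrt aE) (VF/Real.sqrt aE) (tEx bEE bIE aE NIfun x)))
      * heval




/- STATEMENT 14: Suppose A < 0 and −A·Ĩ(τ_E) < τ_E·(I_m + τ_E).  Then
F(N_E) := N_E(τ_E + I_1(N_E,N_I(N_E))) satisfies
F'(N_E) ≥ I_m + τ_E + (A/τ_E)·Ĩ(τ_E) > 0 on (0,1/τ_E), hence F is strictly increasing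
there and the steady-state system has exactly one solution. -/
set_option maxHeartbeats 1000000 in
theorem unique_steady_state_of_A_neg (VR VF bEE bIE bEI bII τE τI aE aI ν : ℝ)
    (hV : VR < VF) (hbEE : 0 < bEE) (hbIE : 0 < bIE) (hbEI : 0 < bEI) (hbII : 0 < bII)
    (hτE : 0 < τE) (hτI : 0 < τI) (haE : 0 < aE) (haI : 0 < aI) (hν : 0 ≤ ν)
    (NIfun : ℝ → ℝ)
    (hNIfun : ∀ NE : ℝ, 0 ≤ NE → NIfun NE ∈ Set.Ioo 0 (1 / τI) ∧
      NIfun NE * (τI + I2 VR VF bEE bEI bII aI ν NE (NIfun NE)) = 1)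
    (Fd : ℝ → ℝ)
    (hFd : ∀ NE ∈ Set.Ioo (0 : ℝ) (1 / τE),
      HasDerivAt (fun x => x * (τE + I1 VR VF bEE bIE aE ν x (NIfun x))) (Fd NE) NE)
    (hA : Aconst VR VF bEE bIE bEI bII τE aE aI ν NIfun < 0)
    (hineq : -Aconst VR VF bEE bIE bEI bII τE aE aI ν NIfun * Itilde VR VF bIE τE aE NIfun <
      τE * (Imin VR VF bEE bIE τE aE ν NIfun + τE)) :
    (∀ NE ∈ Set.Ioo (0 : ℝ) (1 / τE),
      Imin VR VF bEE bIE τE aE ν NIfun + τE +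
        Aconst VR VF bEE bIE bEI bII τE aE aI ν NIfun / τE * Itilde VR VF bIE τE aE NIfun ≤
      Fd NE) ∧
    0 < Imin VR VF bEE bIE τE aE ν NIfun + τE +
      Aconst VR VF bEE bIE bEI bII τE aE aI ν NIfun / τE * Itilde VR VF bIE τE aE NIfun ∧
    StrictMonoOn (fun x => x * (τE + I1 VR VF bEE bIE aE ν x (NIfun x)))
      (Set.Ioo 0 (1 / τE)) ∧
    ∃! p : ℝ × ℝ, p.1 ∈ Set.Ioo 0 (1 / τE) ∧ p.2 ∈ Set.Ioo 0 (1 / τI) ∧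
      p.1 * (τE + I1 VR VF bEE bIE aE ν p.1 p.2) = 1 ∧
      p.2 * (τI + I2 VR VF bEE bEI bII aI ν p.1 p.2) = 1 := by
  have hsE : (0:ℝ) < Real.sqrt aE := Real.sqrt_pos.2 haE
  have hsI : (0:ℝ) < Real.sqrt aI := Real.sqrt_pos.2 haI
  have hrEF : VR/Real.sqrt aE < VF/Real.sqrt aE := (div_lt_div_iff_of_pos_right hsE).2 hV
  have hrIF : VR/Real.sqrt aI < VF/Real.sqrt aI := (div_lt_div_iff_of_pos_right hsI).2 hV
  have hτEinv : (0:ℝ) < 1/τE := by positivity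
  have hNI : ∀ z, 0 ≤ z → 0 < NIfun z ∧ NIfun z * (τI + Kf (VR/Real.sqrt aI) (VF/Real.sqrt aI)
      ((bEI*z - bII*NIfun z + (bEI-bEE)*ν)/Real.sqrt aI)) = 1 := by
    intro z hz
    refine ⟨(hNIfun z hz).1.1, ?_⟩
    rw [← I2_eq]
    exact (hNIfun z hz).2
  have hNIlt : ∀ z, 0 ≤ z → NIfun z < 1/τI := fun z hz => (hNIfun z hz).1.2
  -- Itilde
  have hItilde : Itilde VR VF bIE τE aE NIfun =
      Jf (VR/Real.sqrt aE) (VF/Real.sqrt aE) (-(bIE*NIfun (1/τE))/Real.sqrt aE) :=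
    Itilde_eq VR VF bIE τE aE NIfun
  have hIt0 : 0 ≤ Itilde VR VF bIE τE aE NIfun := by
    rw [hItilde]; exact Jf_nonneg hrEF.le _
  -- bullet 2 : positivity
  have hpos : 0 < Imin VR VF bEE bIE τE aE ν NIfun + τE +
      Aconst VR VF bEE bIE bEI bII τE aE aI ν NIfun / τE * Itilde VR VF bIE τE aE NIfun := by
    have heq : Imin VR VF bEE bIE τE aE ν NIfun + τE +
        Aconst VR VF bEE bIE bEI bII τE aE aI ν NIfun / τE * Itilde VR VF bIE τE aE NIfun =
        (τE * (Imin VR VF bEE bIE τE aE ν NIfun + τE) +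
          Aconst VR VF bEE bIE bEI bII τE aE aI ν NIfun * Itilde VR VF bIE τE aE NIfun)/τE := by
      field_simp
    rw [heq]
    apply div_pos _ hτE
    nlinarith [hineq]
  -- Imin : bounds
  have hSBdd : BddBelow ((fun NE => I1 VR VF bEE bIE aE ν NE (NIfun NE)) '' Set.Icc 0 (1/τE)) := by
    refine ⟨0, fun y hy => ?_⟩
    obtain ⟨z, hz, rfl⟩ := hy
    dsimp only
    rw [I1_eq]
    exact Kf_nonneg hrEF.le _
  have hImin_le : ∀ z, z ∈ Set.Icc (0:ℝ) (1/τE) →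
      Imin VR VF bEE bIE τE aE ν NIfun ≤
        Kf (VR/Real.sqrt aE) (VF/Real.sqrt aE) ((bEE*z - bIE*NIfun z)/Real.sqrt aE) := by
    intro z hz
    rw [← I1_eq]
    exact csInf_le hSBdd ⟨z, hz, rfl⟩
  have hImin_pos : 0 < Imin VR VF bEE bIE τE aE ν NIfun := by
    apply lt_of_lt_of_le (Kf_pos hrEF (bEE*(1/τE)/Real.sqrt aE))
    apply le_csInf ((Set.nonempty_Icc.2 hτEinv.le).image _)
    rintro y ⟨z, hz, rfl⟩
    dsimp only
    rw [I1_eq]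
    apply Kf_anti hrEF
    apply (div_le_div_iff_of_pos_right hsE).2
    have h1 := (hNI z hz.1).1
    have h2 := hz.2
    nlinarith
  -- upper bound for I1 along the curve
  have hI1_ub : ∀ z, z ∈ Set.Icc (0:ℝ) (1/τE) →
      Kf (VR/Real.sqrt aE) (VF/Real.sqrt aE) ((bEE*z - bIE*NIfun z)/Real.sqrt aE) ≤
        Kf (VR/Real.sqrt aE) (VF/Real.sqrt aE) (-(bIE*(1/τI))/Real.sqrt aE) := by
    intro z hz
    apply Kf_anti hrEF
    apply (div_le_div_iff_of_pos_right hsE).2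
    have h1 := hNIlt z hz.1
    have h2 := hz.1
    nlinarith
  -- bullet 1
  have hb1 : ∀ NE ∈ Set.Ioo (0:ℝ) (1/τE),
      Imin VR VF bEE bIE τE aE ν NIfun + τE +
        Aconst VR VF bEE bIE bEI bII τE aE aI ν NIfun / τE * Itilde VR VF bIE τE aE NIfun ≤
      Fd NE := by
    intro x hx
    obtain ⟨n', hn'eq, hFdeq⟩ := key_deriv VR VF bEE bIE bEI bII τE τI aE aI ν hV hbEE hbIE hbEI
      hbII hτE hτI haE haI NIfun hNIfun Fd hFd x hx
    rw [hFdeq]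
    set T := (NIfun x)^2 * Jf (VR/Real.sqrt aI) (VF/Real.sqrt aI)
      (tIx bEE bEI bII aI ν NIfun x) with hT_def
    set Tlo := (NIfun 0)^2 * Jf (VR/Real.sqrt aI) (VF/Real.sqrt aI)
      (tIx bEE bEI bII aI ν NIfun (1/τE)) with hTlo_def
    set Thi := (NIfun (1/τE))^2 * Jf (VR/Real.sqrt aI) (VF/Real.sqrt aI)
      (tIx bEE bEI bII aI ν NIfun 0) with hThi_def
    have hT0 : 0 ≤ T := mul_nonneg (sq_nonneg _) (Jf_nonneg hrIF.le _)
    have hTlo0 : 0 ≤ Tlo := mul_nonneg (sq_nonneg _) (Jf_nonneg hrIF.le _)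
    have hThi0 : 0 ≤ Thi := mul_nonneg (sq_nonneg _) (Jf_nonneg hrIF.le _)
    have htImono := fun (x1 x2 : ℝ) (h1 : 0 ≤ x1) (h12 : x1 ≤ x2) =>
      tI_mono (cI := (bEI-bEE)*ν) hrIF hbEI hbII hsI hτI hNI h1 h12
    have hNImono := fun (x1 x2 : ℝ) (h1 : 0 ≤ x1) (h12 : x1 ≤ x2) =>
      NIfun_mono (cI := (bEI-bEE)*ν) hrIF hbEI hbII hsI hτI hNI h1 h12
    -- T bounds
    have hTloT : Tlo ≤ T := by
      rw [hTlo_def, hT_def]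
      apply mul_le_mul
      · apply pow_le_pow_left₀ (hNI 0 le_rfl).1.le (hNImono 0 x le_rfl hx.1.le)
      · apply Jf_anti hrIF.le
        exact htImono x (1/τE) hx.1.le hx.2.le
      · exact Jf_nonneg hrIF.le _
      · exact sq_nonneg _
    have hTThi : T ≤ Thi := by
      rw [hThi_def, hT_def]
      apply mul_le_mul
      · apply pow_le_pow_left₀ (hNI x hx.1.le).1.le (hNImono x (1/τE) hx.1.le hx.2.le)
      · apply Jf_anti hrIF.le
        exact htImono 0 x le_rfl hx.1.le
      · exact Jf_nonneg hrIF.le _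
      · exact sq_nonneg _
    have hden : (0:ℝ) < Real.sqrt aI + bII*T :=
      lt_of_lt_of_le hsI (le_add_of_nonneg_right (mul_nonneg hbII.le hT0))
    have hdenhi : (0:ℝ) < Real.sqrt aI + bII*Thi :=
      lt_of_lt_of_le hsI (le_add_of_nonneg_right (mul_nonneg hbII.le hThi0))
    have hn'val : n' = bEI*T/(Real.sqrt aI + bII*T) := by
      rw [eq_div_iff hden.ne']
      linarith [hn'eq]
    -- A ≤ (-bEE + bIE n')/√aE
    have hRn' : bEI*Tlo/(Real.sqrt aI + bII*Thi) ≤ n' := by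
      rw [hn'val, div_le_div_iff₀ hdenhi hden]
      nlinarith [mul_nonneg (sub_nonneg.2 hTloT) hsI.le,
        mul_nonneg (mul_nonneg hbII.le hT0) (sub_nonneg.2 (hTloT.trans hTThi)), hbEI.le,
        mul_nonneg (mul_nonneg hbEI.le (mul_nonneg hbII.le hT0))
          (sub_nonneg.2 (hTloT.trans hTThi)),
        mul_nonneg (mul_nonneg hbEI.le (sub_nonneg.2 hTloT)) hsI.le]
    have hAle : Aconst VR VF bEE bIE bEI bII τE aE aI ν NIfun ≤ (-bEE + bIE*n')/Real.sqrt aE := by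
      rw [show (-bEE + bIE*n')/Real.sqrt aE = -(bEE/Real.sqrt aE) + bIE/Real.sqrt aE * n' from
        by ring, Aconst]
      apply add_le_add le_rfl
      apply mul_le_mul_of_nonneg_left _ (by positivity : (0:ℝ) ≤ bIE/Real.sqrt aE)
      rw [Ifun_eq, Ifun_eq]
      have e1 : bEI * (NIfun 0)^2 * Jf (VR/Real.sqrt aI) (VF/Real.sqrt aI)
          ((bEI*(1/τE) - bII*NIfun (1/τE) + (bEI-bEE)*ν)/Real.sqrt aI) = bEI * Tlo := by
        rw [hTlo_def, tIx]; ring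
      have e2 : Real.sqrt aI + bII * (NIfun (1/τE))^2 * Jf (VR/Real.sqrt aI) (VF/Real.sqrt aI)
          ((bEI*0 - bII*NIfun 0 + (bEI-bEE)*ν)/Real.sqrt aI) = Real.sqrt aI + bII*Thi := by
        rw [hThi_def, tIx]; ring
      rw [e1, e2]
      exact hRn'
    -- J ≤ Itilde
    have hJle : Jf (VR/Real.sqrt aE) (VF/Real.sqrt aE) (tEx bEE bIE aE NIfun x) ≤
        Itilde VR VF bIE τE aE NIfun := by
      rw [hItilde]
      apply Jf_anti hrEF.le
      rw [tEx]
      apply (div_le_div_iff_of_pos_right hsE).2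
      have h1 := hNImono x (1/τE) hx.1.le hx.2.le
      nlinarith [hx.1.le]
    have hJ0 : 0 ≤ Jf (VR/Real.sqrt aE) (VF/Real.sqrt aE) (tEx bEE bIE aE NIfun x) :=
      Jf_nonneg hrEF.le _
    have hKge : Imin VR VF bEE bIE τE aE ν NIfun ≤
        Kf (VR/Real.sqrt aE) (VF/Real.sqrt aE) (tEx bEE bIE aE NIfun x) := by
      rw [tEx]
      exact hImin_le x ⟨hx.1.le, hx.2.le⟩
    -- final inequality
    set Ab := (-bEE + bIE*n')/Real.sqrt aE with hAb_def
    set Jx := Jf (VR/Real.sqrt aE) (VF/Real.sqrt aE) (tEx bEE bIE aE NIfun x) with hJx_def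
    set It := Itilde VR VF bIE τE aE NIfun with hIt_def
    set Ac := Aconst VR VF bEE bIE bEI bII τE aE aI ν NIfun with hAc_def
    have hxt : x * τE < 1 := by
      have := hx.2
      rw [lt_div_iff₀ hτE] at this
      linarith
    have key : Ac/τE * It ≤ x * Jx * Ab := by
      rcases le_or_gt Ab 0 with hAb | hAb
      · have s1 : It * Ab ≤ Jx * Ab := mul_le_mul_of_nonpos_right hJle hAb
        have s2 : x * (It * Ab) ≤ x * (Jx * Ab) := mul_le_mul_of_nonneg_left s1 hx.1.le
        have s3 : It * Ab ≤ 0 := mul_nonpos_of_nonneg_of_nonpos hIt0 hAb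
        have s4 : (1/τE) * (It * Ab) ≤ x * (It * Ab) := by
          apply mul_le_mul_of_nonpos_right hx.2.le s3
        have s5 : (1/τE) * (It * Ac) ≤ (1/τE) * (It * Ab) := by
          apply mul_le_mul_of_nonneg_left _ hτEinv.le
          exact mul_le_mul_of_nonneg_left hAle hIt0
        have : Ac/τE * It = (1/τE) * (It * Ac) := by ring
        rw [this]
        calc (1/τE) * (It * Ac) ≤ (1/τE) * (It * Ab) := s5
          _ ≤ x * (It * Ab) := s4
          _ ≤ x * (Jx * Ab) := s2
          _ = x * Jx * Ab := by ring
      · have s1 : 0 ≤ x * Jx * Ab := mul_nonneg (mul_nonneg hx.1.le hJ0) hAb.le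
        have s2 : Ac/τE * It ≤ 0 := by
          apply mul_nonpos_of_nonpos_of_nonneg _ hIt0
          exact div_nonpos_of_nonpos_of_nonneg hA.le hτE.le
        linarith
    linarith [hKge, key]
  -- bullet 3
  have hmono : StrictMonoOn (fun x => x * (τE + I1 VR VF bEE bIE aE ν x (NIfun x)))
      (Set.Ioo 0 (1/τE)) := by
    apply strictMonoOn_of_deriv_pos (convex_Ioo _ _)
    · intro z hz
      exact ((hFd z hz).differentiableAt.continuousAt).continuousWithinAt
    · intro z hz
      rw [interior_Ioo] at hz
      rw [(hFd z hz).deriv]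
      exact lt_of_lt_of_le hpos (hb1 z hz)
  refine ⟨hb1, hpos, hmono, ?_⟩
  -- bullet 4 : existence and uniqueness
  -- existence point via IVT
  set C := Kf (VR/Real.sqrt aE) (VF/Real.sqrt aE) (-(bIE*(1/τI))/Real.sqrt aE) with hC_def
  have hC0 : 0 < C := Kf_pos hrEF _
  have hIm := hImin_pos
  set Im := Imin VR VF bEE bIE τE aE ν NIfun with hIm_def
  have hτIm : 0 < τE + Im := by linarith
  set b := (1/(τE+Im) + 1/τE)/2 with hb_def
  have hblt : 1/(τE+Im) < 1/τE := by
    apply one_div_lt_one_div_of_lt hτE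
    linarith
  have hb0 : 0 < b := by
    have : 0 < 1/(τE+Im) := by positivity
    rw [hb_def]; linarith
  have hbmax : b < 1/τE := by rw [hb_def]; linarith
  have hbmin : 1/(τE+Im) < b := by rw [hb_def]; linarith
  set a := min (b/2) (1/(2*(τE+C))) with ha_def
  have ha0 : 0 < a := by
    apply lt_min (by linarith)
    positivity
  have hab : a < b := lt_of_le_of_lt (min_le_left _ _) (by linarith)
  have hamax : a < 1/τE := lt_trans hab hbmax
  have hFb : 1 < b * (τE + I1 VR VF bEE bIE aE ν b (NIfun b)) := by
    have h1 : Im ≤ I1 VR VF bEE bIE aE ν b (NIfun b) := by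
      rw [I1_eq]
      exact hImin_le b ⟨hb0.le, hbmax.le⟩
    have h2 : 1 < b * (τE + Im) := by
      rw [div_lt_iff₀ hτIm] at hbmin
      linarith
    nlinarith
  have hFa : a * (τE + I1 VR VF bEE bIE aE ν a (NIfun a)) < 1 := by
    have h1 : I1 VR VF bEE bIE aE ν a (NIfun a) ≤ C := by
      rw [I1_eq, hC_def]
      exact hI1_ub a ⟨ha0.le, hamax.le⟩
    have h2 : a ≤ 1/(2*(τE+C)) := min_le_right _ _
    have h3 : a * (τE + I1 VR VF bEE bIE aE ν a (NIfun a)) ≤ a * (τE + C) :=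
      mul_le_mul_of_nonneg_left (by linarith) ha0.le
    have h4 : a * (τE + C) ≤ (1/(2*(τE+C))) * (τE + C) :=
      mul_le_mul_of_nonneg_right h2 (by linarith)
    have h5 : (1/(2*(τE+C))) * (τE + C) = 1/2 := by
      field_simp
    linarith
  have hcont : ContinuousOn (fun x => x * (τE + I1 VR VF bEE bIE aE ν x (NIfun x)))
      (Set.Icc a b) := by
    intro z hz
    have hz' : z ∈ Set.Ioo (0:ℝ) (1/τE) :=
      ⟨lt_of_lt_of_le ha0 hz.1, lt_of_le_of_lt hz.2 hbmax⟩
    exact ((hFd z hz').differentiableAt.continuousAt).continuousWithinAt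
  obtain ⟨x0, hx0mem, hFx0⟩ := intermediate_value_Icc hab.le hcont
    ⟨le_of_lt hFa, le_of_lt hFb⟩
  have hx0Ioo : x0 ∈ Set.Ioo (0:ℝ) (1/τE) :=
    ⟨lt_of_lt_of_le ha0 hx0mem.1, lt_of_le_of_lt hx0mem.2 hbmax⟩
  -- uniqueness of the NI component
  have hNIuniq : ∀ x y, 0 ≤ x → 0 < y →
      y * (τI + I2 VR VF bEE bEI bII aI ν x y) = 1 → y = NIfun x := by
    intro x y hx hy hey
    rw [I2_eq] at hey
    have hex := (hNI x hx).2
    have hnx := (hNI x hx).1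
    rcases lt_trichotomy y (NIfun x) with h | h | h
    · exfalso
      have := g_strictmono (bEI := bEI) (cI := (bEI-bEE)*ν) hrIF hbII hsI hτI x hy h
      rw [hey, hex] at this
      exact lt_irrefl 1 this
    · exact h
    · exfalso
      have := g_strictmono (bEI := bEI) (cI := (bEI-bEE)*ν) hrIF hbII hsI hτI x hnx h
      rw [hey, hex] at this
      exact lt_irrefl 1 this
  refine ⟨(x0, NIfun x0), ⟨hx0Ioo, (hNIfun x0 hx0Ioo.1.le).1, hFx0, (hNIfun x0 hx0Ioo.1.le).2⟩, ?_⟩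
  rintro ⟨x, y⟩ ⟨hxm, hym, he1, he2⟩
  have hyx : y = NIfun x := hNIuniq x y hxm.1.le hym.1 he2
  rw [hyx] at he1
  have hxx : x = x0 := by
    apply hmono.injOn hxm hx0Ioo
    show x * (τE + I1 VR VF bEE bIE aE ν x (NIfun x)) =
      x0 * (τE + I1 VR VF bEE bIE aE ν x0 (NIfun x0))
    rw [he1]
    exact hFx0.symm
  rw [Prod.ext_iff]
  exact ⟨hxx, by rw [hyx, hxx]⟩
end

section
/- For the one-population NNLIF model with refractory period τ, there exists at least one stationary firing rate, i.e., a number N with 0 < N < 1/τ satisfying N·(τ + I(N)) = 1, where I(N) := ∫_0^∞ (e^{-s²/2}/s)(e^{s·(V_F − bN − ν_{ext})/√a} − e^{s·(V_R − bN − ν_{ext})/√a}) ds. Moreover, if b ≤ 0 (average-inhibitory population) this stationary firing rate is unique. -/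
/-- I(N) := ∫_0^∞ (e^{-s²/2}/s)(e^{s·(V_F − bN − ν_{ext})/√a} − e^{s·(V_R − bN − ν_{ext})/√a}) ds. -/
noncomputable def Ione (VR VF a b ν N : ℝ) : ℝ :=
  K ((VR - b * N - ν) / Real.sqrt a) ((VF - b * N - ν) / Real.sqrt a)

open MeasureTheory Real Set

lemma exp_diff_le (x y : ℝ) (h : y ≤ x) : Real.exp x - Real.exp y ≤ (x - y) * Real.exp x := by
  have h1 : y - x + 1 ≤ Real.exp (y - x) := Real.add_one_le_exp _
  have h2 : Real.exp (y - x) * Real.exp x = Real.exp y := by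
    rw [← Real.exp_add]; ring_nf
  nlinarith [Real.exp_pos x]

lemma bound_ptwise {wR wF C s : ℝ} (hs : 0 < s) (h : wR ≤ wF) (hC : wF ≤ C) :
    ‖Real.exp (-s ^ 2 / 2) / s * (Real.exp (s * wF) - Real.exp (s * wR))‖
      ≤ (wF - wR) * Real.exp (C * s - s ^ 2 / 2) := by
  have h0 : 0 ≤ Real.exp (-s ^ 2 / 2) / s := div_nonneg (Real.exp_pos _).le hs.le
  have hd : 0 ≤ Real.exp (s * wF) - Real.exp (s * wR) :=
    sub_nonneg.2 (Real.exp_le_exp.2 (by nlinarith))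
  rw [Real.norm_eq_abs, abs_of_nonneg (mul_nonneg h0 hd)]
  have key : Real.exp (s * wF) - Real.exp (s * wR) ≤ (s * wF - s * wR) * Real.exp (s * C) := by
    have := exp_diff_le (s * wF) (s * wR) (by nlinarith)
    have hle : Real.exp (s * wF) ≤ Real.exp (s * C) := Real.exp_le_exp.2 (by nlinarith)
    nlinarith [Real.exp_pos (s * wF)]
  calc Real.exp (-s ^ 2 / 2) / s * (Real.exp (s * wF) - Real.exp (s * wR))
      ≤ Real.exp (-s ^ 2 / 2) / s * ((s * wF - s * wR) * Real.exp (s * C)) := by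
        exact mul_le_mul_of_nonneg_left key h0
    _ = (wF - wR) * Real.exp (C * s - s ^ 2 / 2) := by
        have : Real.exp (C * s - s ^ 2 / 2) = Real.exp (s * C) * Real.exp (-s ^ 2 / 2) := by
          rw [← Real.exp_add]; ring_nf
        rw [this]; field_simp

lemma gauss_int (C : ℝ) : Integrable (fun s : ℝ => Real.exp (C * s - s ^ 2 / 2)) := by
  have h1 : Integrable (fun s : ℝ => Real.exp (-(1/2 : ℝ) * (s - C) ^ 2)) :=
    (integrable_exp_neg_mul_sq (by norm_num)).comp_sub_right C
  refine (h1.const_mul (Real.exp (C ^ 2 / 2))).congr ?_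
  filter_upwards with s
  rw [← Real.exp_add]
  congr 1
  ring

lemma K_integrable {wR wF C : ℝ} (h : wR ≤ wF) (hC : wF ≤ C) :
    IntegrableOn
      (fun s => Real.exp (-s ^ 2 / 2) / s * (Real.exp (s * wF) - Real.exp (s * wR)))
      (Ioi 0) := by
  refine Integrable.mono' (((gauss_int C).const_mul (wF - wR)).integrableOn) ?_ ?_
  · exact Measurable.aestronglyMeasurable (by fun_prop)
  · rw [ae_restrict_iff' measurableSet_Ioi]
    filter_upwards with s hs
    exact bound_ptwise hs h hC

lemma K_pos_s16 {wR wF : ℝ} (h : wR < wF) : 0 < K wR wF := by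
  rw [K]
  rw [setIntegral_pos_iff_support_of_nonneg_ae ?_ (K_integrable h.le le_rfl)]
  · have hsub : Ioi (0:ℝ) ⊆ Function.support
        (fun s => Real.exp (-s ^ 2 / 2) / s * (Real.exp (s * wF) - Real.exp (s * wR))) := by
      intro s hs
      have hs' : (0:ℝ) < s := hs
      have : 0 < Real.exp (-s ^ 2 / 2) / s * (Real.exp (s * wF) - Real.exp (s * wR)) :=
        mul_pos (div_pos (Real.exp_pos _) hs')
          (sub_pos.2 (Real.exp_lt_exp.2 (by nlinarith)))
      exact ne_of_gt this
    rw [inter_eq_right.2 hsub, Real.volume_Ioi]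
    exact ENNReal.zero_lt_top
  · filter_upwards [ae_restrict_mem measurableSet_Ioi] with s hs
    have hs' : (0:ℝ) < s := hs
    exact mul_nonneg (div_nonneg (Real.exp_pos _).le hs'.le)
      (sub_nonneg.2 (Real.exp_le_exp.2 (by nlinarith)))

lemma K_shift_mono {wR wF δ : ℝ} (h : wR ≤ wF) (hδ : 0 ≤ δ) :
    K wR wF ≤ K (wR + δ) (wF + δ) := by
  rw [K, K]
  refine setIntegral_mono_on (K_integrable h le_rfl) (K_integrable (by linarith) le_rfl)
    measurableSet_Ioi ?_
  intro s hs
  have hs' : (0:ℝ) < s := hs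
  have h0 : 0 ≤ Real.exp (-s ^ 2 / 2) / s := div_nonneg (Real.exp_pos _).le hs'.le
  refine mul_le_mul_of_nonneg_left ?_ h0
  have heq : Real.exp (s * (wF + δ)) - Real.exp (s * (wR + δ))
      = (Real.exp (s * wF) - Real.exp (s * wR)) * Real.exp (s * δ) := by
    rw [mul_add, mul_add, Real.exp_add, Real.exp_add]; ring
  rw [heq]
  have hd : 0 ≤ Real.exp (s * wF) - Real.exp (s * wR) :=
    sub_nonneg.2 (Real.exp_le_exp.2 (by nlinarith))
  have he : 1 ≤ Real.exp (s * δ) := Real.one_le_exp (mul_nonneg hs'.le hδ)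
  nlinarith

lemma Ione_continuous (VR VF a b ν : ℝ) (hV : VR < VF) (ha : 0 < a) :
    Continuous (fun N => Ione VR VF a b ν N) := by
  have hs0 : 0 < Real.sqrt a := Real.sqrt_pos.2 ha
  rw [continuous_iff_continuousAt]
  intro N₀
  have hrepr : (fun N => Ione VR VF a b ν N) = fun N =>
      ∫ s, Real.exp (-s ^ 2 / 2) / s *
        (Real.exp (s * ((VF - b * N - ν) / Real.sqrt a))
          - Real.exp (s * ((VR - b * N - ν) / Real.sqrt a)))
        ∂(volume.restrict (Ioi 0)) := rfl
  rw [hrepr]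
  set C : ℝ := (|VF| + |b| * (|N₀| + 1) + |ν|) / Real.sqrt a with hC
  refine continuousAt_of_dominated (bound := fun s =>
      (VF - VR) / Real.sqrt a * Real.exp (C * s - s ^ 2 / 2)) ?_ ?_ ?_ ?_
  · filter_upwards with N
    exact Measurable.aestronglyMeasurable (by fun_prop)
  · filter_upwards [Metric.ball_mem_nhds N₀ one_pos] with N hN
    rw [ae_restrict_iff' measurableSet_Ioi]
    filter_upwards with s hs
    have hs' : (0:ℝ) < s := hs
    have hNb : |N| ≤ |N₀| + 1 := by
      have h1 : |N - N₀| < 1 := by simpa [Real.dist_eq] using hN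
      have h2 := abs_sub_abs_le_abs_sub N N₀
      linarith
    have hbN : -(b * N) ≤ |b| * (|N₀| + 1) := by
      have h1 : -(b * N) ≤ |b * N| := neg_le_abs _
      rw [abs_mul] at h1
      nlinarith [abs_nonneg b, abs_nonneg N]
    have hwle : (VR - b * N - ν) / Real.sqrt a ≤ (VF - b * N - ν) / Real.sqrt a := by
      gcongr <;> linarith
    have hwC : (VF - b * N - ν) / Real.sqrt a ≤ C := by
      rw [hC]
      gcongr <;> nlinarith [le_abs_self VF, neg_le_abs ν]
    have := bound_ptwise hs' hwle hwC
    have heq : (VF - b * N - ν) / Real.sqrt a - (VR - b * N - ν) / Real.sqrt a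
        = (VF - VR) / Real.sqrt a := by
      field_simp
      ring
    rw [heq] at this
    exact this
  · exact (((gauss_int C).const_mul _).restrict)
  · filter_upwards with s
    fun_prop

/- STATEMENT 16: For the one-population NNLIF model with refractory period τ, there exists
at least one stationary firing rate, i.e. N ∈ (0, 1/τ) with N·(τ + I(N)) = 1.  Moreover,
if b ≤ 0 (average-inhibitory population) this stationary firing rate is unique. -/
theorem one_population_steady_state (VR VF a τ b ν : ℝ)
    (hV : VR < VF) (ha : 0 < a) (hτ : 0 < τ) :
    (∃ N : ℝ, N ∈ Set.Ioo 0 (1 / τ) ∧ N * (τ + Ione VR VF a b ν N) = 1) ∧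
    (b ≤ 0 → ∃! N : ℝ, N ∈ Set.Ioo 0 (1 / τ) ∧ N * (τ + Ione VR VF a b ν N) = 1) := by
  have hs0 : 0 < Real.sqrt a := Real.sqrt_pos.2 ha
  have hIpos : ∀ N : ℝ, 0 < Ione VR VF a b ν N := by
    intro N
    refine K_pos_s16 ?_
    gcongr <;> linarith
  have hcont : Continuous (fun N => N * (τ + Ione VR VF a b ν N)) :=
    continuous_id.mul (continuous_const.add (Ione_continuous VR VF a b ν hV ha))
  have h1τ : (0:ℝ) < 1 / τ := by positivity
  have hΦ0 : (0:ℝ) * (τ + Ione VR VF a b ν 0) = 0 := by ring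
  have hΦ1 : 1 < (1/τ) * (τ + Ione VR VF a b ν (1/τ)) := by
    have hI := hIpos (1/τ)
    have hne : τ ≠ 0 := ne_of_gt hτ
    have : (1/τ) * (τ + Ione VR VF a b ν (1/τ)) = 1 + Ione VR VF a b ν (1/τ) / τ := by
      field_simp
    rw [this]
    have : 0 < Ione VR VF a b ν (1/τ) / τ := by positivity
    linarith
  have key := intermediate_value_Ioo h1τ.le hcont.continuousOn
  have hmem : (1:ℝ) ∈ Ioo ((0:ℝ) * (τ + Ione VR VF a b ν 0))
      ((1/τ) * (τ + Ione VR VF a b ν (1/τ))) := by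
    rw [hΦ0]; exact ⟨one_pos, hΦ1⟩
  obtain ⟨N, hN, hΦN⟩ := key hmem
  replace hΦN : N * (τ + Ione VR VF a b ν N) = 1 := hΦN
  refine ⟨⟨N, hN, hΦN⟩, ?_⟩
  intro hb
  have hmono : ∀ N1 N2 : ℝ, 0 < N1 → N1 < N2 →
      N1 * (τ + Ione VR VF a b ν N1) < N2 * (τ + Ione VR VF a b ν N2) := by
    intro N1 N2 hN1 h12
    have hIle : Ione VR VF a b ν N1 ≤ Ione VR VF a b ν N2 := by
      have hδ : 0 ≤ (b * N1 - b * N2) / Real.sqrt a := by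
        apply div_nonneg _ hs0.le
        nlinarith
      have e1 : (VR - b * N2 - ν) / Real.sqrt a
          = (VR - b * N1 - ν) / Real.sqrt a + (b * N1 - b * N2) / Real.sqrt a := by
        rw [← add_div]; congr 1; ring
      have e2 : (VF - b * N2 - ν) / Real.sqrt a
          = (VF - b * N1 - ν) / Real.sqrt a + (b * N1 - b * N2) / Real.sqrt a := by
        rw [← add_div]; congr 1; ring
      rw [Ione, Ione, e1, e2]
      refine K_shift_mono ?_ hδ
      gcongr <;> linarith
    have h1 := hIpos N1
    nlinarith
  refine ⟨N, ⟨hN, hΦN⟩, ?_⟩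
  rintro N' ⟨hN', hΦN'⟩
  rcases lt_trichotomy N' N with h | h | h
  · have := hmono N' N hN'.1 h
    rw [hΦN, hΦN'] at this
    exact absurd this (lt_irrefl 1)
  · exact h
  · have := hmono N N' hN.1 h
    rw [hΦN, hΦN'] at this
    exact absurd this (lt_irrefl 1)
end
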